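/- arXiv:2602.16556 — 3 statements merged into one kernel-verified Lean document; each statement's English description precedes it below -/
import Mathlib

section
/- Let Z be a finite set with |Z| > n and let Q denote the poset of all subsets of Z ordered by inclusion. If there exists an order-embedding φ of the Boolean lattice Q_n (subsets of [n] ordered by inclusion) into Q, then there exists a subset X ⊆ Z with |X| = n and an order-embedding φ' of the Boolean lattice on X into Q with the same image as φ, satisfying φ'(S) ∩ X = S for all S ⊆ X. -/
/-- Axenovich–Walzer: an embedding of the Boolean lattice `Q_n` into the
subsets of a ground set `Z` with `|Z| > n` can be re-parametrised over a
subset `X ⊆ Z` with `|X| = n`, with the same image, so that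
`φ'(S) ∩ X = S` for all `S ⊆ X`. -/
theorem stmt0 {α : Type*} [DecidableEq α] (n : ℕ) (Z : Finset α) (hZ : n < Z.card)
    (φ : Finset (Fin n) → Finset α)
    (hφZ : ∀ S, φ S ⊆ Z)
    (hφ : ∀ S T, S ⊆ T ↔ φ S ⊆ φ T) :
    ∃ (X : Finset α) (φ' : Finset α → Finset α),
      X ⊆ Z ∧ X.card = n ∧
      (∀ A B, A ⊆ X → B ⊆ X → (A ⊆ B ↔ φ' A ⊆ φ' B)) ∧
      (∀ A, A ⊆ X → ∃ S, φ' A = φ S) ∧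
      (∀ S, ∃ A, A ⊆ X ∧ φ' A = φ S) ∧
      (∀ A, A ⊆ X → φ' A ∩ X = A) := by
  -- choose `x i ∈ φ {i} \ φ {i}ᶜ`
  have hne : ∀ i : Fin n, (φ {i} \ φ ({i}ᶜ)).Nonempty := by
    intro i
    rw [Finset.sdiff_nonempty]
    intro h
    have := (hφ {i} ({i}ᶜ)).2 h (Finset.mem_singleton_self i)
    simp at this
  choose x hx using hne
  have hxmem : ∀ i S, x i ∈ φ S ↔ i ∈ S := by
    intro i S
    have h1 := Finset.mem_sdiff.1 (hx i)
    constructor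
    · intro h
      by_contra hiS
      have hsub : S ⊆ ({i}ᶜ : Finset (Fin n)) := by
        intro j hj
        simp only [Finset.mem_compl, Finset.mem_singleton]
        rintro rfl; exact hiS hj
      exact h1.2 ((hφ S ({i}ᶜ)).1 hsub h)
    · intro h
      exact (hφ {i} S).1 (Finset.singleton_subset_iff.2 h) h1.1
  have hinj : Function.Injective x := by
    intro i j hij
    by_contra hne'
    have h1 : x i ∈ φ {i} := (hxmem i {i}).2 (Finset.mem_singleton_self i)
    have h2 : x j ∉ φ {i} := fun h => hne' ((Finset.mem_singleton.1 ((hxmem j {i}).1 h)).symm ▸ rfl)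
    exact h2 (hij ▸ h1)
  set X : Finset α := Finset.univ.image x with hX
  have hmemX : ∀ a, a ∈ X ↔ ∃ i, x i = a := by
    intro a; simp [hX]
  set φ' : Finset α → Finset α := fun A => φ (Finset.univ.filter (fun i => x i ∈ A)) with hφ'
  have hSA : ∀ (A : Finset α) (i : Fin n),
      i ∈ Finset.univ.filter (fun j => x j ∈ A) ↔ x i ∈ A := by
    intro A i; simp
  refine ⟨X, φ', ?_, ?_, ?_, ?_, ?_, ?_⟩
  · intro a ha
    obtain ⟨i, rfl⟩ := (hmemX a).1 ha
    exact hφZ {i} ((hxmem i {i}).2 (Finset.mem_singleton_self i))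
  · rw [hX, Finset.card_image_of_injective _ hinj, Finset.card_univ, Fintype.card_fin]
  · intro A B hA hB
    constructor
    · intro hAB
      refine (hφ _ _).1 ?_
      intro i hi
      exact (hSA B i).2 (hAB ((hSA A i).1 hi))
    · intro h
      intro a haA
      obtain ⟨i, rfl⟩ := (hmemX a).1 (hA haA)
      have : i ∈ Finset.univ.filter (fun j => x j ∈ A) := (hSA A i).2 haA
      have := (hφ _ _).2 h this
      exact (hSA B i).1 this
  · intro A _; exact ⟨_, rfl⟩
  · intro S
    refine ⟨S.image x, ?_, ?_⟩
    · intro a ha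
      obtain ⟨i, _, rfl⟩ := Finset.mem_image.1 ha
      exact (hmemX _).2 ⟨i, rfl⟩
    · show φ _ = φ S
      congr 1
      ext i
      simp only [Finset.mem_filter, Finset.mem_univ, true_and, Finset.mem_image]
      constructor
      · rintro ⟨j, hj, hji⟩; exact hinj hji ▸ hj
      · intro h; exact ⟨i, h, rfl⟩
  · intro A hA
    ext a
    simp only [Finset.mem_inter]
    constructor
    · rintro ⟨h1, h2⟩
      obtain ⟨i, rfl⟩ := (hmemX a).1 h2
      have := (hxmem i _).1 h1
      exact (hSA A i).1 this
    · intro haA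
      obtain ⟨i, rfl⟩ := (hmemX a).1 (hA haA)
      exact ⟨(hxmem i _).2 ((hSA A i).2 haA), hA haA⟩
end

section
/- Let n be divisible by 60, c = 1/3, h = 0.05, N = (2+c)n, t = 2n/3 + cn/2 + hn. For any R, Y ⊆ [N] with |R| = N/2, |Y| = n, |R ∩ Y| = 2n/3, the family K_t(R,Y) = {T ⊆ [N] : |T| = t, T ∩ Y ⊆ R ∩ Y, R \ Y ⊆ T \ Y, |T ∩ Y| ≥ n/3} has size at least binom(2n/3, n/3) · binom(2n/3 + cn/2, hn). -/
/-- The `t`-cone `K_t(R,Y)` has size at least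
`binom(2n/3, n/3) · binom(2n/3 + n/6, n/20)`. Here `60 ∣ n`, `N = 7n/3`,
`t = 2n/3 + n/6 + n/20`, `|R| = N/2`, `|Y| = n`, `|R ∩ Y| = 2n/3`. -/
theorem stmt7 (n N : ℕ) (h60 : 60 ∣ n) (hN : 3 * N = 7 * n)
    (R Y : Finset (Fin N)) (hR : 2 * R.card = N) (hY : Y.card = n)
    (hRY : (R ∩ Y).card = 2 * n / 3) :
    (2*n/3).choose (n/3) * (2*n/3 + n/6).choose (n/20) ≤
      ((Finset.univ : Finset (Fin N)).powerset.filter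
        (fun T => T.card = 2*n/3 + n/6 + n/20 ∧ T ∩ Y ⊆ R ∩ Y ∧ R \ Y ⊆ T \ Y ∧
          n/3 ≤ (T ∩ Y).card)).card := by
  obtain ⟨m, hm⟩ := h60
  subst hm
  have hNval : N = 140 * m := by omega
  subst hNval
  have e1 : 2*(60*m)/3 = 40*m := by omega
  have e2 : (60*m)/3 = 20*m := by omega
  have e3 : (60*m)/6 = 10*m := by omega
  have e4 : (60*m)/20 = 3*m := by omega
  rw [e1] at hRY
  rw [e1, e2, e3, e4]
  have hRcard : R.card = 70*m := by omega
  have hsd : (R \ Y).card = 30*m := by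
    have := Finset.card_sdiff_add_card_inter R Y
    omega
  have hCcard : ((R ∪ Y)ᶜ).card = 50*m := by
    have h1 := Finset.card_union_add_card_inter R Y
    have h2 : ((R ∪ Y)ᶜ).card = 140*m - (R ∪ Y).card := by
      rw [Finset.card_compl, Fintype.card_fin]
    omega
  -- helper identities
  have hTY : ∀ A B : Finset (Fin (140*m)), A ⊆ R ∩ Y → B ⊆ (R ∪ Y)ᶜ →
      (R \ Y ∪ A ∪ B) ∩ Y = A := by
    intro A B hA hB
    ext x
    simp only [Finset.mem_inter, Finset.mem_union, Finset.mem_sdiff]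
    constructor
    · rintro ⟨h1, h2⟩
      rcases h1 with (⟨_, h3⟩ | h) | h
      · exact absurd h2 h3
      · exact h
      · exact absurd (Finset.mem_union_right R h2) (Finset.mem_compl.mp (hB h))
    · intro hx
      exact ⟨Or.inl (Or.inr hx), (Finset.mem_inter.mp (hA hx)).2⟩
  have hTB : ∀ A B : Finset (Fin (140*m)), A ⊆ R ∩ Y → B ⊆ (R ∪ Y)ᶜ →
      (R \ Y ∪ A ∪ B) \ (R ∪ Y) = B := by
    intro A B hA hB
    ext x
    simp only [Finset.mem_sdiff, Finset.mem_union]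
    constructor
    · rintro ⟨h1, h2⟩
      rcases h1 with (⟨h3, _⟩ | h) | h
      · exact absurd (Or.inl h3) h2
      · exact absurd (Or.inl (Finset.mem_inter.mp (hA h)).1) h2
      · exact h
    · intro hx
      have := Finset.mem_compl.mp (hB hx)
      simp only [Finset.mem_union] at this
      exact ⟨Or.inr hx, this⟩
  have key : ((Finset.powersetCard (20*m) (R ∩ Y)) ×ˢ
      (Finset.powersetCard (3*m) ((R ∪ Y)ᶜ))).card ≤
      ((Finset.univ : Finset (Fin (140*m))).powerset.filter
        (fun T => T.card = 40*m + 10*m + 3*m ∧ T ∩ Y ⊆ R ∩ Y ∧ R \ Y ⊆ T \ Y ∧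
          20*m ≤ (T ∩ Y).card)).card := by
    apply Finset.card_le_card_of_injOn (fun p => R \ Y ∪ p.1 ∪ p.2)
    · rintro ⟨A, B⟩ hp
      simp only [Finset.mem_coe, Finset.mem_product, Finset.mem_powersetCard] at hp
      obtain ⟨⟨hA1, hA2⟩, hB1, hB2⟩ := hp
      have hAY : A ⊆ Y := hA1.trans Finset.inter_subset_right
      have d1 : Disjoint (R \ Y) A := by
        rw [Finset.disjoint_left]
        intro x hx hxA
        exact (Finset.mem_sdiff.mp hx).2 (hAY hxA)
      have d2 : Disjoint (R \ Y ∪ A) B := by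
        rw [Finset.disjoint_right]
        intro x hx
        have := Finset.mem_compl.mp (hB1 hx)
        simp only [Finset.mem_union] at this ⊢
        simp only [Finset.mem_sdiff]
        push_neg
        exact ⟨fun h => (this (Or.inl h)).elim, fun h => this (Or.inr (hAY h))⟩
      simp only [Finset.mem_coe, Finset.mem_filter, Finset.mem_powerset]
      refine ⟨Finset.subset_univ _, ?_, ?_, ?_, ?_⟩
      · rw [Finset.card_union_of_disjoint d2, Finset.card_union_of_disjoint d1,
          hsd, hA2, hB2]
        ring
      · rw [hTY A B hA1 hB1]; exact hA1
      · intro x hx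
        have hxY := (Finset.mem_sdiff.mp hx).2
        exact Finset.mem_sdiff.mpr ⟨Finset.mem_union_left _ (Finset.mem_union_left _ hx), hxY⟩
      · rw [hTY A B hA1 hB1, hA2]
    · rintro ⟨A, B⟩ hp ⟨A', B'⟩ hq heq
      simp only [Finset.coe_product, Set.mem_prod, Finset.mem_coe,
        Finset.mem_powersetCard] at hp hq
      obtain ⟨⟨hA1, _⟩, hB1, _⟩ := hp
      obtain ⟨⟨hA1', _⟩, hB1', _⟩ := hq
      simp only at heq
      have h1 : A = A' := by
        rw [← hTY A B hA1 hB1, ← hTY A' B' hA1' hB1', heq]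
      have h2 : B = B' := by
        rw [← hTB A B hA1 hB1, ← hTB A' B' hA1' hB1', heq]
      exact Prod.ext h1 h2
  rw [Finset.card_product, Finset.card_powersetCard, Finset.card_powersetCard,
    hRY, hCcard] at key
  calc (40*m).choose (20*m) * (40*m + 10*m).choose (3*m)
      = (40*m).choose (20*m) * (50*m).choose (3*m) := by ring_nf
    _ ≤ _ := key
end

section
/- Suppose there exist families S₁ ⊆ [N]^(s) and T₁ ⊆ [N]^(t) satisfying the pivot conditions of Lemma (pivot_points), where N = (2+c)n with c = 1/3, s = 2n/3, t = 2n/3 + cn/2 + hn. Then the families S₂ = {[N]\T : T ∈ T₁} and T₂ = {[N]\S : S ∈ S₁} satisfy: (i) no S ∈ S₂ is a subset of any T ∈ T₂; (ii) for any P, X ⊆ [N] with |P| = N/2, |X| = n, |P ∩ X| = n/3, there exists S ∈ S₂ with P ∩ X ⊆ S ∩ X, S \ X ⊆ P \ X, and |S ∩ X| ≤ 2n/3; (iii) for any P, X ⊆ [N] with |P| = N − n/3, |X| = n, X ⊆ P, there exists T ∈ T₂ with T ∩ X ⊆ P ∩ X, P \ X ⊆ T \ X, and |T ∩ X| ≥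 2n/3. -/
/-- Complementation: if `S₁ ⊆ [N]^(s)`, `T₁ ⊆ [N]^(t)` satisfy the pivot conditions
of Lemma (pivot_points), then `S₂ = {[N]\T : T ∈ T₁}` and `T₂ = {[N]\S : S ∈ S₁}`
satisfy the dual pivot conditions of Lemma (above_pivots). -/
theorem stmt10 (n N : ℕ) (h60 : 60 ∣ n) (hN : 3 * N = 7 * n)
    (S₁ T₁ : Finset (Finset (Fin N)))
    (hS₁card : ∀ S ∈ S₁, S.card = 2*n/3)
    (hT₁card : ∀ T ∈ T₁, T.card = 2*n/3 + n/6 + n/20)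
    (hno : ∀ S ∈ S₁, ∀ T ∈ T₁, ¬ S ⊆ T)
    (hpiv1 : ∀ P X : Finset (Fin N), P.card = n/3 → X.card = n → P ∩ X = ∅ →
      ∃ S ∈ S₁, P ∩ X ⊆ S ∩ X ∧ S \ X ⊆ P \ X ∧ (S ∩ X).card ≤ n/3)
    (hpiv2 : ∀ P X : Finset (Fin N), 2 * P.card = N → X.card = n →
        (P ∩ X).card = 2*n/3 →
      ∃ T ∈ T₁, T ∩ X ⊆ P ∩ X ∧ P \ X ⊆ T \ X ∧ n/3 ≤ (T ∩ X).card) :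
    (∀ S ∈ T₁.image (·ᶜ), ∀ T ∈ S₁.image (·ᶜ), ¬ S ⊆ T) ∧
    (∀ P X : Finset (Fin N), 2 * P.card = N → X.card = n → (P ∩ X).card = n/3 →
      ∃ S ∈ T₁.image (·ᶜ), P ∩ X ⊆ S ∩ X ∧ S \ X ⊆ P \ X ∧ (S ∩ X).card ≤ 2*n/3) ∧
    (∀ P X : Finset (Fin N), P.card = N - n/3 → X.card = n → X ⊆ P →
      ∃ T ∈ S₁.image (·ᶜ), T ∩ X ⊆ P ∩ X ∧ P \ X ⊆ T \ X ∧ 2*n/3 ≤ (T ∩ X).card) := by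

  obtain ⟨k, rfl⟩ := h60
  refine ⟨?_, ?_, ?_⟩
  · intro S hS T hT hsub
    simp only [Finset.mem_image] at hS hT
    obtain ⟨T', hT', rfl⟩ := hS
    obtain ⟨S', hS', rfl⟩ := hT
    exact hno S' hS' T' hT' (Finset.compl_subset_compl.mp hsub)
  · intro P X hP hX hPX
    have hPc : 2 * Pᶜ.card = N := by
      have := Finset.card_compl P
      simp [Fintype.card_fin] at this
      omega
    have hXle : X.card ≤ Fintype.card (Fin N) := X.card_le_univ.trans (by simp)
    have h1 : (Pᶜ ∩ X).card = 2 * (60*k) / 3 := by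
      have : Pᶜ ∩ X = X \ P := by
        ext x; simp [and_comm]
      rw [this]
      have h2 := Finset.card_inter_add_card_sdiff X P
      rw [Finset.inter_comm] at h2
      omega
    obtain ⟨T, hT, hTX, hPT, hcard⟩ := hpiv2 Pᶜ X hPc hX h1
    refine ⟨Tᶜ, Finset.mem_image_of_mem _ hT, ?_, ?_, ?_⟩
    · intro x hx
      simp only [Finset.mem_inter] at hx ⊢
      refine ⟨?_, hx.2⟩
      simp only [Finset.mem_compl]
      intro hxT
      have := hTX (Finset.mem_inter.mpr ⟨hxT, hx.2⟩)
      simp only [Finset.mem_inter, Finset.mem_compl] at this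
      exact this.1 hx.1
    · intro x hx
      simp only [Finset.mem_sdiff, Finset.mem_compl] at hx ⊢
      refine ⟨?_, hx.2⟩
      by_contra hxP
      have := hPT (Finset.mem_sdiff.mpr ⟨Finset.mem_compl.mpr hxP, hx.2⟩)
      simp only [Finset.mem_sdiff] at this
      exact hx.1 this.1
    · have hsplit : (T ∩ X).card + (Tᶜ ∩ X).card = X.card := by
        have : Tᶜ ∩ X = X \ T := by ext x; simp [and_comm]
        rw [this]
        have h2 := Finset.card_inter_add_card_sdiff X T
        rw [Finset.inter_comm] at h2
        omega
      omega
  · intro P X hP hX hXP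
    have hPc : Pᶜ.card = 60*k/3 := by
      have := Finset.card_compl P
      simp [Fintype.card_fin] at this
      have hle : P.card ≤ N := P.card_le_univ.trans (by simp)
      omega
    have hdisj : Pᶜ ∩ X = ∅ := by
      rw [Finset.eq_empty_iff_forall_notMem]
      intro x hx
      simp only [Finset.mem_inter, Finset.mem_compl] at hx
      exact hx.1 (hXP hx.2)
    obtain ⟨S, hS, _, hSP, hcard⟩ := hpiv1 Pᶜ X hPc hX hdisj
    refine ⟨Sᶜ, Finset.mem_image_of_mem _ hS, ?_, ?_, ?_⟩
    · intro x hx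
      simp only [Finset.mem_inter] at hx ⊢
      exact ⟨hXP hx.2, hx.2⟩
    · intro x hx
      simp only [Finset.mem_sdiff, Finset.mem_compl] at hx ⊢
      refine ⟨?_, hx.2⟩
      intro hxS
      have := hSP (Finset.mem_sdiff.mpr ⟨hxS, hx.2⟩)
      simp only [Finset.mem_sdiff, Finset.mem_compl] at this
      exact this.1 hx.1
    · have hsplit : (S ∩ X).card + (Sᶜ ∩ X).card = X.card := by
        have h3 : Sᶜ ∩ X = X \ S := by ext x; simp [and_comm]
        rw [h3]
        have h2 := Finset.card_inter_add_card_sdiff X S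
        rw [Finset.inter_comm] at h2
        omega
      omega
end
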